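/- Let n ≥ 1 and let a : [0,1] → ℝ^{n×n} be a C¹ path of real symmetric positive definite matrices. Define the pointwise norm ‖b‖_a = ( Tr(a⁻¹ b a⁻¹ b) · √(det a) )^{1/2} for symmetric b. Then | (det a(1))^{1/4} − (det a(0))^{1/4} | ≤ (√n / 4) · ∫₀¹ ‖a′(t)‖_{a(t)} dt. -/

import Mathlib

set_option maxHeartbeats 1000000

open Matrix

attribute [local instance] Matrix.normedAddCommGroup Matrix.normedSpace

namespace DetQuarterAux

variable {n : ℕ}

/-- The determinant as a continuous multilinear map in the rows. -/
noncomputable def detCM (n : ℕ) : ContinuousMultilinearMap ℝ (fun _ : Fin n => (Fin n → ℝ)) ℝ :=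
  MultilinearMap.mkContinuous
    ((Matrix.detRowAlternating : (Fin n → ℝ) [⋀^Fin n]→ₗ[ℝ] ℝ).toMultilinearMap)
    (n.factorial) (by
      intro m
      have h1 : (Matrix.detRowAlternating (Matrix.of m) : ℝ) = (Matrix.of m).det := rfl
      show ‖(Matrix.of m).det‖ ≤ _
      rw [Matrix.det_apply]
      refine le_trans (norm_sum_le _ _) ?_
      have hterm : ∀ σ : Equiv.Perm (Fin n),
          ‖Equiv.Perm.sign σ • ∏ i, Matrix.of m (σ i) i‖ ≤ ∏ i, ‖m i‖ := by
        intro σ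
        have : ‖Equiv.Perm.sign σ • ∏ i, Matrix.of m (σ i) i‖
            = ‖∏ i, Matrix.of m (σ i) i‖ := by
          rcases Int.units_eq_one_or (Equiv.Perm.sign σ) with h | h <;>
            simp [h, Units.smul_def]
        rw [this]
        calc ‖∏ i, Matrix.of m (σ i) i‖ ≤ ∏ i, ‖Matrix.of m (σ i) i‖ := by
              simp only [Real.norm_eq_abs, Finset.abs_prod]; exact le_refl _
          _ ≤ ∏ i, ‖m (σ i)‖ := by
              refine Finset.prod_le_prod (fun i _ => norm_nonneg _) (fun i _ => ?_)
              exact norm_le_pi_norm (m (σ i)) i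
          _ = ∏ i, ‖m i‖ := Equiv.prod_comp σ fun i => ‖m i‖
      calc (∑ σ : Equiv.Perm (Fin n), ‖Equiv.Perm.sign σ • ∏ i, Matrix.of m (σ i) i‖)
          ≤ ∑ _σ : Equiv.Perm (Fin n), ∏ i, ‖m i‖ :=
            Finset.sum_le_sum fun σ _ => hterm σ
        _ = (n.factorial : ℝ) * ∏ i, ‖m i‖ := by
            rw [Finset.sum_const, Finset.card_univ, Fintype.card_perm, Fintype.card_fin,
              nsmul_eq_mul]
        )

lemma detCM_apply (m : Fin n → Fin n → ℝ) : detCM n m = (Matrix.of m).det := rfl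

/-- Sum of determinants with one row replaced equals trace against the adjugate. -/
lemma sum_det_updateRow (A B : Matrix (Fin n) (Fin n) ℝ) :
    ∑ i, (A.updateRow i (B i)).det = (A.adjugate * B).trace := by
  have h : ∀ i, (A.updateRow i (B i)).det = ∑ j, A.adjugate j i * B i j := by
    intro i
    rw [← Matrix.cramer_transpose_apply, Matrix.cramer_eq_adjugate_mulVec]
    simp [Matrix.mulVec, dotProduct, ← Matrix.adjugate_transpose]
  simp only [h]
  rw [Matrix.trace]
  rw [Finset.sum_comm]
  simp [Matrix.diag, Matrix.mul_apply, mul_comm]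

/-- Jacobi's formula. -/
theorem hasDerivAt_det {a : ℝ → Matrix (Fin n) (Fin n) ℝ} {A' : Matrix (Fin n) (Fin n) ℝ}
    {t : ℝ} (h : HasDerivAt a A' t) :
    HasDerivAt (fun s => (a s).det) (((a t).adjugate * A').trace) t := by
  have h1 : HasDerivAt (fun s => detCM n (a s)) ((detCM n).linearDeriv (a t) A') t :=
    ((detCM n).hasFDerivAt (a t)).comp_hasDerivAt t h
  have h2 : (detCM n).linearDeriv (a t) A' = ((a t).adjugate * A').trace := by
    erw [ContinuousMultilinearMap.linearDeriv_apply]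
    rw [← sum_det_updateRow]
    rfl
  rw [h2] at h1
  exact h1



lemma trace_sq_eq {X : Matrix (Fin n) (Fin n) ℝ} (hX : X.IsSymm) :
    (X * X).trace = ∑ i, ∑ j, (X i j) ^ 2 := by
  simp only [Matrix.trace, Matrix.diag, Matrix.mul_apply]
  refine Finset.sum_congr rfl fun i _ => Finset.sum_congr rfl fun j _ => ?_
  have : X j i = X i j := by
    conv_lhs => rw [← hX]
    rfl
  rw [this, sq]

open scoped MatrixOrder in
lemma trace_cs {A B : Matrix (Fin n) (Fin n) ℝ} (hA : A.PosDef) (hB : B.IsSymm) :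
    0 ≤ (A⁻¹ * B * A⁻¹ * B).trace ∧
      |(A⁻¹ * B).trace| ≤ Real.sqrt n * Real.sqrt ((A⁻¹ * B * A⁻¹ * B).trace) := by
  classical
  have hAinv : (A⁻¹).PosDef := hA.inv
  have hs : (A⁻¹).PosSemidef := hAinv.posSemidef
  set S := CFC.sqrt (A⁻¹) with hSdef
  have hSH : S.IsHermitian := (CFC.sqrt_nonneg (A⁻¹)).posSemidef.1
  have hSS : S * S = A⁻¹ := CFC.sqrt_mul_sqrt_self _ hs.nonneg
  set X := S * B * S with hXdef
  have hXsymm : X.IsSymm := by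
    have hSsymm : S.IsSymm := by
      rw [Matrix.IsSymm, ← Matrix.conjTranspose_eq_transpose_of_trivial]
      exact hSH
    rw [Matrix.IsSymm] at *
    rw [hXdef, Matrix.transpose_mul, Matrix.transpose_mul, hSsymm, hB]
    rw [mul_assoc]
  have htr1 : (A⁻¹ * B).trace = X.trace := by
    rw [← hSS, mul_assoc, Matrix.trace_mul_comm]
  have htr2 : (A⁻¹ * B * A⁻¹ * B).trace = (X * X).trace := by
    have e1 : A⁻¹ * B * A⁻¹ * B = S * (S * B * S * S * B) := by
      rw [← hSS]; noncomm_ring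
    have e2 : X * X = (S * B * S * S * B) * S := by
      rw [hXdef]; noncomm_ring
    rw [e1, e2, Matrix.trace_mul_comm]
  have hsq := trace_sq_eq hXsymm
  have hnonneg : 0 ≤ (X * X).trace := by
    rw [hsq]; positivity
  constructor
  · rw [htr2]; exact hnonneg
  rw [htr1, htr2]
  have h1 : X.trace ^ 2 ≤ (n : ℝ) * (X * X).trace := by
    rw [hsq, Matrix.trace]
    have hch := sq_sum_le_card_mul_sum_sq (s := (Finset.univ : Finset (Fin n)))
      (f := fun i => X.diag i) (α := ℝ)
    refine hch.trans ?_
    rw [Finset.card_univ, Fintype.card_fin]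
    refine mul_le_mul_of_nonneg_left ?_ (Nat.cast_nonneg n)
    refine Finset.sum_le_sum fun i _ => ?_
    exact Finset.single_le_sum (f := fun j => (X i j)^2) (fun j _ => sq_nonneg _)
      (Finset.mem_univ i)
  calc |X.trace| ≤ Real.sqrt ((n : ℝ) * (X * X).trace) := Real.abs_le_sqrt h1
    _ = Real.sqrt n * Real.sqrt ((X * X).trace) :=
        Real.sqrt_mul (Nat.cast_nonneg n) _


theorem main {n : ℕ} (hn : 1 ≤ n)
    (a : ℝ → Matrix (Fin n) (Fin n) ℝ)
    (hC1 : ContDiffOn ℝ 1 a (Set.Icc (0 : ℝ) 1))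
    (hsymm : ∀ t ∈ Set.Icc (0 : ℝ) 1, (a t).IsSymm)
    (hpd : ∀ t ∈ Set.Icc (0 : ℝ) 1, (a t).PosDef) :
    |((a 1).det) ^ ((1 : ℝ) / 4) - ((a 0).det) ^ ((1 : ℝ) / 4)| ≤
      (Real.sqrt n / 4) *
        ∫ t in (0 : ℝ)..1,
          Real.sqrt
            (((a t)⁻¹ * deriv a t * (a t)⁻¹ * deriv a t).trace *
              Real.sqrt (a t).det) := by
  classical
  have huniq : UniqueDiffOn ℝ (Set.Icc (0:ℝ) 1) := uniqueDiffOn_Icc zero_lt_one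
  set a' : ℝ → Matrix (Fin n) (Fin n) ℝ := fun t => derivWithin a (Set.Icc (0:ℝ) 1) t with ha'
  have hconta : ContinuousOn a (Set.Icc (0:ℝ) 1) := hC1.continuousOn
  have hconta' : ContinuousOn a' (Set.Icc (0:ℝ) 1) :=
    hC1.continuousOn_derivWithin huniq le_rfl
  have hdiff : DifferentiableOn ℝ a (Set.Icc (0:ℝ) 1) := hC1.differentiableOn one_ne_zero
  have hderivW : ∀ t ∈ Set.Icc (0:ℝ) 1, HasDerivWithinAt a (a' t) (Set.Icc (0:ℝ) 1) t :=
    fun t ht => (hdiff t ht).hasDerivWithinAt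
  set T : (Matrix (Fin n) (Fin n) ℝ) →L[ℝ] (Matrix (Fin n) (Fin n) ℝ) :=
    LinearMap.toContinuousLinearMap
      ((Matrix.transposeLinearEquiv (Fin n) (Fin n) ℝ ℝ).toLinearMap) with hT
  have hTapp : ∀ M : Matrix (Fin n) (Fin n) ℝ, T M = Mᵀ := fun M => rfl
  have ha'symm : ∀ t ∈ Set.Icc (0:ℝ) 1, (a' t).IsSymm := by
    intro t ht
    have h1 : HasDerivWithinAt (fun u => T (a u)) (T (a' t)) (Set.Icc (0:ℝ) 1) t :=
      (T.hasFDerivAt).comp_hasDerivWithinAt t (hderivW t ht)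
    have h2 : HasDerivWithinAt a (T (a' t)) (Set.Icc (0:ℝ) 1) t := by
      refine h1.congr (fun u hu => ?_) ?_
      · rw [hTapp]; exact (hsymm u hu).symm
      · rw [hTapp]; exact (hsymm t ht).symm
    have h3 : derivWithin a (Set.Icc (0:ℝ) 1) t = T (a' t) := h2.derivWithin (huniq t ht)
    have h4 : T (a' t) = a' t := h3.symm
    rw [hTapp] at h4
    exact h4
  have hdet : ∀ t ∈ Set.Icc (0:ℝ) 1, 0 < (a t).det := fun t ht => (hpd t ht).det_pos
  have hder : ∀ t ∈ Set.Ioo (0:ℝ) 1, HasDerivAt a (a' t) t := by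
    intro t ht
    exact (hderivW t (Set.mem_Icc_of_Ioo ht)).hasDerivAt (Icc_mem_nhds ht.1 ht.2)
  set f : ℝ → ℝ := fun t => (a t).det ^ ((1:ℝ)/4) with hf
  set φ : ℝ → ℝ := fun t => (a t).det ^ ((1:ℝ)/4) * ((a t)⁻¹ * a' t).trace / 4 with hφ
  have hderf : ∀ t ∈ Set.Ioo (0:ℝ) 1, HasDerivAt f (φ t) t := by
    intro t ht
    have hts : t ∈ Set.Icc (0:ℝ) 1 := Set.mem_Icc_of_Ioo ht
    have hd0 : (a t).det ≠ 0 := (hdet t hts).ne'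
    have hJ : HasDerivAt (fun u => (a u).det)
        ((a t).det * ((a t)⁻¹ * a' t).trace) t := by
      have hh := hasDerivAt_det (hder t ht)
      convert hh using 1
      rw [Matrix.inv_def, Matrix.smul_mul, Matrix.trace_smul, smul_eq_mul,
        Ring.inverse_eq_inv']
      field_simp
    have hr := hJ.rpow_const (p := (1:ℝ)/4) (Or.inl hd0)
    convert hr using 1
    have hpow : (a t).det ^ ((1:ℝ)/4 - 1) * (a t).det = (a t).det ^ ((1:ℝ)/4) := by
      rw [← Real.rpow_add_one hd0]; norm_num
    show (a t).det ^ ((1:ℝ)/4) * ((a t)⁻¹ * a' t).trace / 4 = _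
    rw [← hpow]; ring
  have hcontdet : ContinuousOn (fun t => (a t).det) (Set.Icc (0:ℝ) 1) :=
    (continuous_id.matrix_det).comp_continuousOn hconta
  have hcontinv : ContinuousOn (fun t => (a t)⁻¹) (Set.Icc (0:ℝ) 1) := by
    intro t ht
    have h1 : ContinuousAt Ring.inverse ((a t).det) := by
      rw [Ring.inverse_eq_inv']
      exact continuousAt_inv₀ (hdet t ht).ne'
    exact (continuousAt_matrix_inv (a t) h1).comp_continuousWithinAt (hconta t ht)
  have hcontY : ContinuousOn (fun t => (a t)⁻¹ * a' t) (Set.Icc (0:ℝ) 1) :=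
    (continuous_fst.matrix_mul continuous_snd).comp_continuousOn (hcontinv.prodMk hconta')
  have hcontTr : ContinuousOn (fun t => ((a t)⁻¹ * a' t).trace) (Set.Icc (0:ℝ) 1) :=
    (continuous_id.matrix_trace).comp_continuousOn hcontY
  have hcontf : ContinuousOn f (Set.Icc (0:ℝ) 1) :=
    hcontdet.rpow_const (fun t _ => Or.inr (by norm_num))
  have hcontφ : ContinuousOn φ (Set.Icc (0:ℝ) 1) :=
    ((hcontdet.rpow_const (fun t _ => Or.inr (by norm_num))).mul hcontTr).div_const 4
  set G : ℝ → ℝ := fun t =>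
    Real.sqrt ((((a t)⁻¹ * a' t) * ((a t)⁻¹ * a' t)).trace * Real.sqrt (a t).det) with hG
  have hcontG : ContinuousOn G (Set.Icc (0:ℝ) 1) := by
    apply Real.continuous_sqrt.comp_continuousOn
    exact ((continuous_id.matrix_trace).comp_continuousOn
      ((continuous_fst.matrix_mul continuous_snd).comp_continuousOn
        (hcontY.prodMk hcontY))).mul (Real.continuous_sqrt.comp_continuousOn hcontdet)
  have hq : ∀ t ∈ Set.Icc (0:ℝ) 1,
      Real.sqrt (Real.sqrt ((a t).det)) = (a t).det ^ ((1:ℝ)/4) := by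
    intro t ht
    rw [Real.sqrt_eq_rpow, Real.sqrt_eq_rpow, ← Real.rpow_mul (hdet t ht).le]
    norm_num
  have hbound : ∀ t ∈ Set.Icc (0:ℝ) 1, |φ t| ≤ Real.sqrt n / 4 * G t := by
    intro t ht
    obtain ⟨hT0, hCS⟩ := trace_cs (hpd t ht) (ha'symm t ht)
    have hD := hdet t ht
    have hD4 : 0 < (a t).det ^ ((1:ℝ)/4) := Real.rpow_pos_of_pos hD _
    have hassoc : (a t)⁻¹ * a' t * (a t)⁻¹ * a' t
        = ((a t)⁻¹ * a' t) * ((a t)⁻¹ * a' t) := by noncomm_ring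
    rw [hassoc] at hT0 hCS
    have e0 : |φ t| = (a t).det ^ ((1:ℝ)/4) * |((a t)⁻¹ * a' t).trace| / 4 := by
      rw [hφ, abs_div, abs_mul, abs_of_pos hD4]
      norm_num
    rw [e0]
    calc (a t).det ^ ((1:ℝ)/4) * |((a t)⁻¹ * a' t).trace| / 4
        ≤ (a t).det ^ ((1:ℝ)/4) *
            (Real.sqrt n * Real.sqrt ((((a t)⁻¹ * a' t) * ((a t)⁻¹ * a' t)).trace)) / 4 := by
          gcongr
      _ = Real.sqrt n / 4 *
            ((a t).det ^ ((1:ℝ)/4) *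
              Real.sqrt ((((a t)⁻¹ * a' t) * ((a t)⁻¹ * a' t)).trace)) := by ring
      _ = Real.sqrt n / 4 * G t := by
          congr 1
          have hGt : G t = Real.sqrt ((((a t)⁻¹ * a' t) * ((a t)⁻¹ * a' t)).trace *
              Real.sqrt (a t).det) := rfl
          rw [hGt, Real.sqrt_mul' _ (Real.sqrt_nonneg _), ← hq t ht]
          ring
  have hintφ : IntervalIntegrable φ MeasureTheory.volume 0 1 :=
    hcontφ.intervalIntegrable_of_Icc zero_le_one
  have hFTC : ∫ t in (0:ℝ)..1, φ t = f 1 - f 0 :=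
    intervalIntegral.integral_eq_sub_of_hasDerivAt_of_le zero_le_one hcontf hderf hintφ
  have habs : |∫ t in (0:ℝ)..1, φ t| ≤ ∫ t in (0:ℝ)..1, |φ t| :=
    intervalIntegral.abs_integral_le_integral_abs zero_le_one
  have hmono : (∫ t in (0:ℝ)..1, |φ t|) ≤ ∫ t in (0:ℝ)..1, (Real.sqrt n / 4 * G t) := by
    refine intervalIntegral.integral_mono_on zero_le_one ?_ ?_ hbound
    · exact hcontφ.abs.intervalIntegrable_of_Icc zero_le_one
    · exact (continuousOn_const.mul hcontG).intervalIntegrable_of_Icc zero_le_one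
  have hconst : (∫ t in (0:ℝ)..1, (Real.sqrt n / 4 * G t))
      = Real.sqrt n / 4 * ∫ t in (0:ℝ)..1, G t :=
    intervalIntegral.integral_const_mul _ _
  have hae : (∫ t in (0:ℝ)..1, G t)
      = ∫ t in (0:ℝ)..1,
          Real.sqrt (((a t)⁻¹ * deriv a t * (a t)⁻¹ * deriv a t).trace *
            Real.sqrt (a t).det) := by
    apply intervalIntegral.integral_congr_ae
    have h1 : ∀ᵐ x : ℝ, x ∉ ({1} : Set ℝ) := by
      rw [← MeasureTheory.measure_eq_zero_iff_ae_notMem]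
      simp
    filter_upwards [h1] with x hx hmem
    have hxo : x ∈ Set.Ioo (0:ℝ) 1 := by
      rw [Set.uIoc_of_le zero_le_one] at hmem
      exact ⟨hmem.1, lt_of_le_of_ne hmem.2 (by simpa using hx)⟩
    have hdx : a' x = deriv a x := derivWithin_of_mem_nhds (Icc_mem_nhds hxo.1 hxo.2)
    have hGx : G x = Real.sqrt ((((a x)⁻¹ * a' x) * ((a x)⁻¹ * a' x)).trace *
        Real.sqrt (a x).det) := rfl
    rw [hGx, hdx]
    congr 2
    noncomm_ring
  have hgoal0 : |f 1 - f 0| ≤ Real.sqrt n / 4 * ∫ t in (0:ℝ)..1, G t := by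
    rw [← hFTC, ← hconst]
    exact habs.trans hmono
  rw [hae] at hgoal0
  exact hgoal0


end DetQuarterAux

/-- Pointwise Lipschitz continuity of the fourth root of the determinant (i.e. the
square root of the volume density) along a `C¹` path of symmetric positive definite
matrices, with respect to the pointwise Ebin norm. -/
theorem det_quarter_root_lipschitz {n : ℕ} (hn : 1 ≤ n)
    (a : ℝ → Matrix (Fin n) (Fin n) ℝ)
    (hC1 : ContDiffOn ℝ 1 a (Set.Icc (0 : ℝ) 1))
    (hsymm : ∀ t ∈ Set.Icc (0 : ℝ) 1, (a t).IsSymm)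
    (hpd : ∀ t ∈ Set.Icc (0 : ℝ) 1, (a t).PosDef) :
    |((a 1).det) ^ ((1 : ℝ) / 4) - ((a 0).det) ^ ((1 : ℝ) / 4)| ≤
      (Real.sqrt n / 4) *
        ∫ t in (0 : ℝ)..1,
          Real.sqrt
            (((a t)⁻¹ * deriv a t * (a t)⁻¹ * deriv a t).trace *
              Real.sqrt (a t).det) := by
  exact DetQuarterAux.main hn a hC1 hsymm hpd
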